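/- Let (Ω, 𝔄, P) be a probability space, let δ, B be real constants with 0 < δ ≤ B, and let μ₀, μ̂, g₀, ĝ : Ω → ℝ be measurable functions such that μ₀ − μ̂ ∈ L²(P), 0 ≤ g₀ ≤ B pointwise, and δ ≤ ĝ ≤ B pointwise. Then ∫ (μ₀ − μ̂)·(g₀/ĝ) dP + ∫ (μ̂ − μ₀) dP = ∫ (μ₀ − μ̂)·(g₀ − ĝ)/ĝ dP, and moreover |∫ (μ₀ − μ̂)·(g₀ − ĝ)/ĝ dP| ≤ δ⁻¹·‖μ₀ − μ̂‖_{L²(P)}·‖g₀ − ĝ‖_{L²(P)}. -/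

import Mathlib

open MeasureTheory

/-- The `L²(P)` norm `‖f‖_{L²(P)} = (∫ f² dP)^{1/2}`. -/
noncomputable def L2norm {Ω : Type*} [MeasurableSpace Ω] (P : Measure Ω) (f : Ω → ℝ) : ℝ :=
  (∫ x, (f x) ^ 2 ∂P) ^ ((1 : ℝ) / 2)

/-- Doubly robust second-order decomposition and Cauchy–Schwarz bound:
`∫ (μ₀ − μ̂)(g₀/ĝ) dP + ∫ (μ̂ − μ₀) dP = ∫ (μ₀ − μ̂)(g₀ − ĝ)/ĝ dP` and
`|∫ (μ₀ − μ̂)(g₀ − ĝ)/ĝ dP| ≤ δ⁻¹‖μ₀ − μ̂‖_{L²(P)}‖g₀ − ĝ‖_{L²(P)}`. -/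
theorem doubly_robust_remainder {Ω : Type*} [MeasurableSpace Ω]
    (P : Measure Ω) [IsProbabilityMeasure P]
    (δ B : ℝ) (hδ : 0 < δ) (hδB : δ ≤ B)
    (μ₀ μh g₀ gh : Ω → ℝ)
    (hμ₀m : Measurable μ₀) (hμhm : Measurable μh)
    (hg₀m : Measurable g₀) (hghm : Measurable gh)
    (hL2 : MemLp (fun x => μ₀ x - μh x) 2 P)
    (hg₀b : ∀ x, 0 ≤ g₀ x ∧ g₀ x ≤ B)
    (hghb : ∀ x, δ ≤ gh x ∧ gh x ≤ B) :
    ((∫ x, (μ₀ x - μh x) * (g₀ x / gh x) ∂P) + ∫ x, (μh x - μ₀ x) ∂P =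
        ∫ x, (μ₀ x - μh x) * (g₀ x - gh x) / gh x ∂P) ∧
      |∫ x, (μ₀ x - μh x) * (g₀ x - gh x) / gh x ∂P| ≤
        δ⁻¹ * L2norm P (fun x => μ₀ x - μh x) * L2norm P (fun x => g₀ x - gh x) := by
  have hghne : ∀ x, gh x ≠ 0 := fun x => ne_of_gt (lt_of_lt_of_le hδ (hghb x).1)
  have hfint : Integrable (fun x => μ₀ x - μh x) P := hL2.integrable one_le_two
  have hBpos : 0 < B := lt_of_lt_of_le hδ hδB
  -- boundedness of g₀/gh
  have hbd : ∀ x, ‖g₀ x / gh x‖ ≤ B / δ := by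
    intro x
    rw [Real.norm_eq_abs, abs_div, abs_of_nonneg (hg₀b x).1,
      abs_of_pos (lt_of_lt_of_le hδ (hghb x).1)]
    exact div_le_div₀ (le_of_lt hBpos) (hg₀b x).2 hδ (hghb x).1
  have hint1 : Integrable (fun x => (μ₀ x - μh x) * (g₀ x / gh x)) P := by
    have := hfint.bdd_mul ((hg₀m.div hghm).aestronglyMeasurable) (Filter.Eventually.of_forall hbd)
    simpa [mul_comm] using this
  have hpt : ∀ x, (μ₀ x - μh x) * (g₀ x / gh x) - (μ₀ x - μh x)
      = (μ₀ x - μh x) * (g₀ x - gh x) / gh x := by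
    intro x
    rw [mul_div_assoc, sub_div, div_self (hghne x), mul_sub, mul_one]
  constructor
  · have h1 : ∫ x, (μh x - μ₀ x) ∂P = - ∫ x, (μ₀ x - μh x) ∂P := by
      rw [← integral_neg]; congr 1; funext x; ring
    rw [h1, ← sub_eq_add_neg, ← integral_sub hint1 hfint]
    exact integral_congr_ae (Filter.Eventually.of_forall fun x => hpt x)
  · set f := fun x => μ₀ x - μh x with hf
    set h := fun x => g₀ x - gh x with hh
    have hhbd : ∀ x, ‖h x‖ ≤ B := by
      intro x
      rw [Real.norm_eq_abs, abs_sub_le_iff]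
      constructor
      · linarith [(hg₀b x).2, (hghb x).1, hδ]
      · linarith [(hg₀b x).1, (hghb x).2]
    have hhL2 : MemLp h 2 P :=
      MemLp.of_bound ((hg₀m.sub hghm).aestronglyMeasurable) B
        (Filter.Eventually.of_forall hhbd)
    have hintfh : Integrable (fun x => |f x| * |h x|) P := by
      have := (hfint.abs).bdd_mul
        ((hg₀m.sub hghm).abs.aestronglyMeasurable)
        (Filter.Eventually.of_forall fun x => by simpa [Real.norm_eq_abs, abs_abs] using hhbd x)
      simpa [mul_comm] using this
    have hint2 : Integrable (fun x => f x * h x / gh x) P := by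
      have := hfint.bdd_mul (c := B / δ) ((hg₀m.sub hghm).div hghm).aestronglyMeasurable
        (Filter.Eventually.of_forall fun x => by
          rw [Real.norm_eq_abs, Pi.div_apply, Pi.sub_apply, abs_div, abs_of_pos (lt_of_lt_of_le hδ (hghb x).1)]
          exact div_le_div₀ (le_of_lt hBpos)
            (by simpa [Real.norm_eq_abs] using hhbd x) hδ (hghb x).1)
      simpa [mul_comm, mul_div_assoc] using this
    have step1 : |∫ x, f x * h x / gh x ∂P| ≤ ∫ x, |f x * h x / gh x| ∂P := by
      simpa only [Real.norm_eq_abs] using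
        norm_integral_le_integral_norm (μ := P) (f := fun x => f x * h x / gh x)
    have step2 : ∫ x, |f x * h x / gh x| ∂P ≤ ∫ x, δ⁻¹ * (|f x| * |h x|) ∂P := by
      apply integral_mono hint2.abs (hintfh.const_mul _)
      intro x
      have hghpos : 0 < gh x := lt_of_lt_of_le hδ (hghb x).1
      show |f x * h x / gh x| ≤ δ⁻¹ * (|f x| * |h x|)
      rw [abs_div, abs_mul, abs_of_pos hghpos, div_eq_inv_mul]
      exact mul_le_mul_of_nonneg_right (inv_anti₀ hδ (hghb x).1)
        (by positivity)
    have step3 : ∫ x, δ⁻¹ * (|f x| * |h x|) ∂P = δ⁻¹ * ∫ x, |f x| * |h x| ∂P :=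
      integral_const_mul _ _
    -- Cauchy-Schwarz via Hölder
    have hconj : (2 : ℝ).HolderConjugate 2 := by
      constructor <;> norm_num
    have hfa : MemLp (fun x => |f x|) (ENNReal.ofReal 2) P := by
      have : (ENNReal.ofReal 2) = (2 : ENNReal) := by
        rw [ENNReal.ofReal_ofNat]
      rw [this]
      exact hL2.abs
    have hha : MemLp (fun x => |h x|) (ENNReal.ofReal 2) P := by
      have : (ENNReal.ofReal 2) = (2 : ENNReal) := by
        rw [ENNReal.ofReal_ofNat]
      rw [this]
      exact hhL2.abs
    have holder := integral_mul_le_Lp_mul_Lq_of_nonneg hconj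
      (Filter.Eventually.of_forall fun x => abs_nonneg (f x))
      (Filter.Eventually.of_forall fun x => abs_nonneg (h x)) hfa hha
    have hL2f : (∫ x, |f x| ^ (2 : ℝ) ∂P) ^ ((1:ℝ)/2) = L2norm P f := by
      unfold L2norm
      congr 1
      apply integral_congr_ae
      filter_upwards with x
      rw [show ((2:ℝ)) = ((2:ℕ):ℝ) by norm_num, Real.rpow_natCast, sq_abs]
    have hL2h : (∫ x, |h x| ^ (2 : ℝ) ∂P) ^ ((1:ℝ)/2) = L2norm P h := by
      unfold L2norm
      congr 1
      apply integral_congr_ae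
      filter_upwards with x
      rw [show ((2:ℝ)) = ((2:ℕ):ℝ) by norm_num, Real.rpow_natCast, sq_abs]
    show |∫ x, f x * h x / gh x ∂P| ≤ δ⁻¹ * L2norm P f * L2norm P h
    have hCS : ∫ x, |f x| * |h x| ∂P ≤ L2norm P f * L2norm P h := by
      rw [← hL2f, ← hL2h]
      exact holder
    calc |∫ x, f x * h x / gh x ∂P|
        ≤ ∫ x, |f x * h x / gh x| ∂P := step1
      _ ≤ ∫ x, δ⁻¹ * (|f x| * |h x|) ∂P := step2
      _ = δ⁻¹ * ∫ x, |f x| * |h x| ∂P := step3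
      _ ≤ δ⁻¹ * (L2norm P f * L2norm P h) := by
          apply mul_le_mul_of_nonneg_left hCS (inv_nonneg.mpr (le_of_lt hδ))
      _ = δ⁻¹ * L2norm P f * L2norm P h := by ring
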